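/- Let A be a weak *-Hopf algebra with a normalized Haar integral h. For a left integral l ∈ A set d_R(l) := Σ S(l₍₁₎)·l₍₂₎ and d_L(l) := Σ S⁻¹(l₍₂₎)·l₍₁₎. Then: (i) h·a is a left integral for every a ∈ A; (ii) every left integral l satisfies d_R(l) ∈ A_R, d_L(l) ∈ A_L, and l = h·d_R(l) = h·d_L(l); (iii) d_R(h·a) = a for all a ∈ A_R and d_L(h·a) = a for all a ∈ A_L; consequently right multiplication by elements of A_R (equivalently of A_L) on h gives a linear bijection from A_R (resp. A_L) onto the space of left integrals of A. -/

import Mathlib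

open scoped TensorProduct

noncomputable section

/-- The componentwise star operation on a tensor product of star algebras,
as an additive map (it is conjugate-linear, hence not a `LinearMap`). -/
def tensorStar (A B : Type) [Ring A] [Algebra ℂ A] [StarRing A] [StarModule ℂ A]
    [Ring B] [Algebra ℂ B] [StarRing B] [StarModule ℂ B] :
    A ⊗[ℂ] B →+ A ⊗[ℂ] B :=
  TensorProduct.liftAddHom
    (AddMonoidHom.mk'
      (fun a => AddMonoidHom.mk' (fun b => star a ⊗ₜ[ℂ] star b)
        (fun x y => by
          show star a ⊗ₜ[ℂ] star (x + y) = star a ⊗ₜ[ℂ] star x + star a ⊗ₜ[ℂ] star y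
          rw [star_add, TensorProduct.tmul_add]))
      (fun x y => by
        ext b
        show star (x + y) ⊗ₜ[ℂ] star b = star x ⊗ₜ[ℂ] star b + star y ⊗ₜ[ℂ] star b
        rw [star_add, TensorProduct.add_tmul]))
    (fun r a b => by
      show star (r • a) ⊗ₜ[ℂ] star b = star a ⊗ₜ[ℂ] star (r • b)
      rw [star_smul, star_smul, TensorProduct.smul_tmul])

/-- A finite dimensional weak `*`-Hopf algebra over `ℂ` (axioms of [BNS]),
together with the derived properties of the antipode (which follow from the
axioms and are included as fields for convenience). -/
structure WeakHopfAlgebra (A : Type) [Ring A] [Algebra ℂ A] [StarRing A] [StarModule ℂ A] where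
  Δ : A →ₗ[ℂ] A ⊗[ℂ] A
  ε : A →ₗ[ℂ] ℂ
  S : A →ₗ[ℂ] A
  Sinv : A →ₗ[ℂ] A
  finite : FiniteDimensional ℂ A
  Δ_mul : ∀ x y : A, Δ (x * y) = Δ x * Δ y
  Δ_star : ∀ x : A, Δ (star x) = tensorStar A A (Δ x)
  coassoc : ∀ x : A,
    (TensorProduct.assoc ℂ A A A) ((TensorProduct.map Δ (LinearMap.id : A →ₗ[ℂ] A)) (Δ x))
      = (TensorProduct.map (LinearMap.id : A →ₗ[ℂ] A) Δ) (Δ x)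
  counit_left : ∀ x : A,
    (TensorProduct.lid ℂ A) ((TensorProduct.map ε (LinearMap.id : A →ₗ[ℂ] A)) (Δ x)) = x
  counit_right : ∀ x : A,
    (TensorProduct.rid ℂ A) ((TensorProduct.map (LinearMap.id : A →ₗ[ℂ] A) ε) (Δ x)) = x
  unit_weak :
    (Δ 1 ⊗ₜ[ℂ] (1 : A)) * ((TensorProduct.assoc ℂ A A A).symm ((1 : A) ⊗ₜ[ℂ] Δ 1))
      = (TensorProduct.map Δ (LinearMap.id : A →ₗ[ℂ] A)) (Δ 1)
  unit_weak' :
    ((TensorProduct.assoc ℂ A A A).symm ((1 : A) ⊗ₜ[ℂ] Δ 1)) * (Δ 1 ⊗ₜ[ℂ] (1 : A))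
      = (TensorProduct.map Δ (LinearMap.id : A →ₗ[ℂ] A)) (Δ 1)
  counit_weak : ∀ x y z : A,
    ε (x * y * z) = (TensorProduct.lid ℂ ℂ)
      ((TensorProduct.map (ε ∘ₗ LinearMap.mulLeft ℂ x) (ε ∘ₗ LinearMap.mulRight ℂ z)) (Δ y))
  counit_weak' : ∀ x y z : A,
    ε (x * y * z) = (TensorProduct.lid ℂ ℂ)
      ((TensorProduct.map (ε ∘ₗ LinearMap.mulRight ℂ z) (ε ∘ₗ LinearMap.mulLeft ℂ x)) (Δ y))
  antipode_left : ∀ x : A,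
    LinearMap.mul' ℂ A ((TensorProduct.map S (LinearMap.id : A →ₗ[ℂ] A)) (Δ x))
      = (TensorProduct.rid ℂ A)
          ((TensorProduct.map (LinearMap.id : A →ₗ[ℂ] A) (ε ∘ₗ LinearMap.mulLeft ℂ x)) (Δ 1))
  antipode_right : ∀ x : A,
    LinearMap.mul' ℂ A ((TensorProduct.map (LinearMap.id : A →ₗ[ℂ] A) S) (Δ x))
      = (TensorProduct.lid ℂ A)
          ((TensorProduct.map (ε ∘ₗ LinearMap.mulRight ℂ x) (LinearMap.id : A →ₗ[ℂ] A)) (Δ 1))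
  antipode_mid : ∀ x : A,
    LinearMap.mul' ℂ A
      ((TensorProduct.map (LinearMap.mul' ℂ A ∘ₗ TensorProduct.map S (LinearMap.id : A →ₗ[ℂ] A)) S)
        ((TensorProduct.map Δ (LinearMap.id : A →ₗ[ℂ] A)) (Δ x))) = S x
  S_Sinv : ∀ x : A, S (Sinv x) = x
  Sinv_S : ∀ x : A, Sinv (S x) = x
  S_antimul : ∀ x y : A, S (x * y) = S y * S x
  S_anticomul : ∀ x : A, Δ (S x) = (TensorProduct.comm ℂ A A) ((TensorProduct.map S S) (Δ x))
  S_star : ∀ x : A, star (S (star x)) = Sinv x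

/-- The set of elements commuting with everything. -/
def centerSet (R : Type) [Mul R] : Set R := {z | ∀ r : R, z * r = r * z}

namespace WeakHopfAlgebra

variable {A : Type} [Ring A] [Algebra ℂ A] [StarRing A] [StarModule ℂ A]

/-- `Σ x₍₁₎ · S(x₍₂₎)`. -/
def swIdS (W : WeakHopfAlgebra A) (x : A) : A :=
  LinearMap.mul' ℂ A ((TensorProduct.map (LinearMap.id : A →ₗ[ℂ] A) W.S) (W.Δ x))

/-- `Σ S(x₍₁₎) · x₍₂₎`. -/
def swSId (W : WeakHopfAlgebra A) (x : A) : A :=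
  LinearMap.mul' ℂ A ((TensorProduct.map W.S (LinearMap.id : A →ₗ[ℂ] A)) (W.Δ x))

/-- `Σ x₍₂₎ · S⁻¹(x₍₁₎)`. -/
def swIdSinv (W : WeakHopfAlgebra A) (x : A) : A :=
  LinearMap.mul' ℂ A
    ((TensorProduct.map (LinearMap.id : A →ₗ[ℂ] A) W.Sinv) ((TensorProduct.comm ℂ A A) (W.Δ x)))

/-- `Σ S⁻¹(x₍₂₎) · x₍₁₎`. -/
def swSinvId (W : WeakHopfAlgebra A) (x : A) : A :=
  LinearMap.mul' ℂ A
    ((TensorProduct.map W.Sinv (LinearMap.id : A →ₗ[ℂ] A)) ((TensorProduct.comm ℂ A A) (W.Δ x)))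

/-- The left subalgebra `A_L = {(φ ⊗ id)(Δ 1) : φ ∈ A*}`. -/
def AL (W : WeakHopfAlgebra A) : Set A :=
  {a | ∃ φ : A →ₗ[ℂ] ℂ,
    a = (TensorProduct.lid ℂ A) ((TensorProduct.map φ (LinearMap.id : A →ₗ[ℂ] A)) (W.Δ 1))}

/-- The right subalgebra `A_R = {(id ⊗ φ)(Δ 1) : φ ∈ A*}`. -/
def AR (W : WeakHopfAlgebra A) : Set A :=
  {a | ∃ φ : A →ₗ[ℂ] ℂ,
    a = (TensorProduct.rid ℂ A) ((TensorProduct.map (LinearMap.id : A →ₗ[ℂ] A) φ) (W.Δ 1))}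

/-- A left integral: `a · l = Σ a₍₁₎ S(a₍₂₎) · l` for all `a`. -/
def IsLeftIntegral (W : WeakHopfAlgebra A) (l : A) : Prop := ∀ a : A, a * l = W.swIdS a * l

/-- A right integral: `r · a = r · Σ S(a₍₁₎) a₍₂₎` for all `a`. -/
def IsRightIntegral (W : WeakHopfAlgebra A) (r : A) : Prop := ∀ a : A, r * a = r * W.swSId a

/-- A normalized Haar integral. -/
def IsHaar (W : WeakHopfAlgebra A) (h : A) : Prop :=
  W.IsLeftIntegral h ∧ W.IsRightIntegral h ∧ W.swSId h = 1 ∧ W.swIdS h = 1 ∧ W.S h = h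

/-- The canonical left action of a functional `λ ∈ A*` on `A`:
`λ ⇀ a = Σ a₍₁₎ · ⟨λ, a₍₂₎⟩`. -/
def lact (W : WeakHopfAlgebra A) (lam : A →ₗ[ℂ] ℂ) : A →ₗ[ℂ] A :=
  (TensorProduct.rid ℂ A).toLinearMap ∘ₗ
    (TensorProduct.map (LinearMap.id : A →ₗ[ℂ] A) lam) ∘ₗ W.Δ

/-- `λ ∈ A*` is a left integral of the dual weak Hopf algebra:
`λ ⇀ a ∈ A_L` for all `a ∈ A`. -/
def IsDualLeftIntegral (W : WeakHopfAlgebra A) (lam : A →ₗ[ℂ] ℂ) : Prop :=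
  ∀ a : A, W.lact lam a ∈ W.AL

/-- A dual pair of left integrals `(l, λ)`. -/
def IsDualPair (W : WeakHopfAlgebra A) (l : A) (lam : A →ₗ[ℂ] ℂ) : Prop :=
  W.IsLeftIntegral l ∧ W.IsDualLeftIntegral lam ∧
  W.lact lam l = 1 ∧
  (∀ a : A,
    (TensorProduct.rid ℂ A)
      ((TensorProduct.map (LinearMap.id : A →ₗ[ℂ] A) (lam ∘ₗ LinearMap.mulLeft ℂ a)) (W.Δ l))
      = W.S a) ∧
  (∀ a : A,
    (TensorProduct.lid ℂ A)
      ((TensorProduct.map (lam ∘ₗ LinearMap.mulRight ℂ a ∘ₗ W.Sinv)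
        (LinearMap.id : A →ₗ[ℂ] A)) (W.Δ l)) = a)

end WeakHopfAlgebra

/-- A (left) module `*`-algebra over a weak `*`-Hopf algebra. -/
structure ModuleAlgebra {A : Type} [Ring A] [Algebra ℂ A] [StarRing A] [StarModule ℂ A]
    (W : WeakHopfAlgebra A) (M : Type) [Ring M] [Algebra ℂ M] [StarRing M] [StarModule ℂ M] where
  act : A →ₗ[ℂ] M →ₗ[ℂ] M
  act_mul : ∀ (a b : A) (m : M), act (a * b) m = act a (act b m)
  act_one : ∀ m : M, act 1 m = m
  act_mul' : ∀ (a : A) (m n : M),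
    act a (m * n) = LinearMap.mul' ℂ M ((TensorProduct.map (act.flip m) (act.flip n)) (W.Δ a))
  act_star : ∀ (a : A) (m : M), star (act a m) = act (star (W.S a)) (star m)
  act_unit : ∀ a : A, act a 1 = act (W.swIdS a) 1

namespace ModuleAlgebra

variable {A : Type} [Ring A] [Algebra ℂ A] [StarRing A] [StarModule ℂ A]
variable {M : Type} [Ring M] [Algebra ℂ M] [StarRing M] [StarModule ℂ M]
variable {W : WeakHopfAlgebra A}

/-- `M_R = A ▷ 1_M`. -/
def MR (MA : ModuleAlgebra W M) : Set M := Set.range fun a : A => MA.act a 1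

/-- The fixed point algebra `M^A`. -/
def fixed (MA : ModuleAlgebra W M) : Set M :=
  {n | ∀ (a : A) (m : M), MA.act a (m * n) = MA.act a m * n}

end ModuleAlgebra

section Crossed

variable {A : Type} [Ring A] [Algebra ℂ A] [StarRing A] [StarModule ℂ A]
variable {M : Type} [Ring M] [Algebra ℂ M] [StarRing M] [StarModule ℂ M]
variable {W : WeakHopfAlgebra A}

/-- The subspace of `M ⊗ A` by which one divides to form the crossed product
`M ⋊ A = M ⊗_{A_L} A`. -/
def crossedRel (MA : ModuleAlgebra W M) : Submodule ℂ (M ⊗[ℂ] A) :=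
  Submodule.span ℂ
    {x | ∃ (m : M) (a b : A), b ∈ W.AL ∧
      x = (m * MA.act b 1) ⊗ₜ[ℂ] a - m ⊗ₜ[ℂ] (b * a)}

/-- The crossed product `M ⋊ A` as a vector space. -/
abbrev Crossed (MA : ModuleAlgebra W M) : Type := (M ⊗[ℂ] A) ⧸ crossedRel MA

/-- The canonical projection `M ⊗ A → M ⋊ A`; `cmk MA (m ⊗ₜ a)` is `m ⋊ a`. -/
def cmk (MA : ModuleAlgebra W M) : M ⊗[ℂ] A →ₗ[ℂ] Crossed MA := (crossedRel MA).mkQ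

/-- The embedding `M → M ⋊ A`, `m ↦ m ⋊ 1`. -/
def iM (MA : ModuleAlgebra W M) : M →ₗ[ℂ] Crossed MA :=
  cmk MA ∘ₗ (TensorProduct.mk ℂ M A).flip (1 : A)

/-- The map `A → M ⋊ A`, `a ↦ 1 ⋊ a`. -/
def iA (MA : ModuleAlgebra W M) : A →ₗ[ℂ] Crossed MA :=
  cmk MA ∘ₗ (TensorProduct.mk ℂ M A) (1 : M)

/-- The unit `1 ⋊ 1` of `M ⋊ A`. -/
def oneC (MA : ModuleAlgebra W M) : Crossed MA := cmk MA ((1 : M) ⊗ₜ[ℂ] (1 : A))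

/-- The multiplication of the crossed product `M ⋊ A`
(whose existence is the content of Theorem 3.1), as a bundled bilinear map
together with its defining formula on generators:
`(m ⋊ a)(m' ⋊ a') = Σ m (a₍₁₎ ▷ m') ⋊ a₍₂₎ a'`. -/
structure CrossedMul (MA : ModuleAlgebra W M) where
  mul : Crossed MA →ₗ[ℂ] Crossed MA →ₗ[ℂ] Crossed MA
  mul_def : ∀ (m m' : M) (a a' : A),
    mul (cmk MA (m ⊗ₜ[ℂ] a)) (cmk MA (m' ⊗ₜ[ℂ] a'))
      = cmk MA ((TensorProduct.map ((LinearMap.mulLeft ℂ m) ∘ₗ (MA.act.flip m'))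
          (LinearMap.mulRight ℂ a')) (W.Δ a))

/-- The star operation of the crossed product `M ⋊ A`
(whose existence is part of Theorem 3.1):
`(m ⋊ a)* = Σ (a₍₁₎* ▷ m*) ⋊ a₍₂₎*`. -/
structure CrossedStar (MA : ModuleAlgebra W M) where
  st : Crossed MA →+ Crossed MA
  st_smul : ∀ (c : ℂ) (x : Crossed MA), st (c • x) = (starRingEnd ℂ c) • st x
  st_def : ∀ (m : M) (a : A),
    st (cmk MA (m ⊗ₜ[ℂ] a))
      = cmk MA ((TensorProduct.map (MA.act.flip (star m)) (LinearMap.id : A →ₗ[ℂ] A))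
          (W.Δ (star a)))

/-- The multiplication on `(M ⋊ A) ⊗ B` induced by a crossed product
multiplication on `M ⋊ A` and the algebra structure of `B`. -/
def mulT (MA : ModuleAlgebra W M) (CS : CrossedMul MA) (B : Type) [Ring B] [Algebra ℂ B] :
    Crossed MA ⊗[ℂ] B →ₗ[ℂ] Crossed MA ⊗[ℂ] B →ₗ[ℂ] Crossed MA ⊗[ℂ] B :=
  TensorProduct.lift
    ((TensorProduct.mapBilinear (RingHom.id ℂ) (Crossed MA) B (Crossed MA) B).compl₁₂ CS.mul
      (LinearMap.mul ℂ B))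

end Crossed


section AuxLemmas

open TensorProduct LinearMap

variable {A : Type} [Ring A] [Algebra ℂ A] [StarRing A] [StarModule ℂ A]
variable (W : WeakHopfAlgebra A)

private lemma commAA (t : A ⊗[ℂ] A) :
    (TensorProduct.comm ℂ A A) ((TensorProduct.comm ℂ A A) t) = t := by
  induction t using TensorProduct.induction_on with
  | zero => simp
  | tmul a b => simp
  | add x y hx hy => simp [map_add, hx, hy]

lemma WeakHopfAlgebra.swSId_eq (x : A) :
    W.swSId x = (TensorProduct.rid ℂ A)
      ((TensorProduct.map (LinearMap.id : A →ₗ[ℂ] A) (W.ε ∘ₗ LinearMap.mulLeft ℂ x)) (W.Δ 1)) :=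
  W.antipode_left x

lemma WeakHopfAlgebra.swIdS_eq (x : A) :
    W.swIdS x = (TensorProduct.lid ℂ A)
      ((TensorProduct.map (W.ε ∘ₗ LinearMap.mulRight ℂ x) (LinearMap.id : A →ₗ[ℂ] A)) (W.Δ 1)) :=
  W.antipode_right x

lemma WeakHopfAlgebra.delta_Sinv (x : A) :
    W.Δ (W.Sinv x)
      = (TensorProduct.map W.Sinv W.Sinv) ((TensorProduct.comm ℂ A A) (W.Δ x)) := by
  have h := W.S_anticomul (W.Sinv x)
  rw [W.S_Sinv] at h
  rw [h, commAA]
  generalize W.Δ (W.Sinv x) = u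
  induction u using TensorProduct.induction_on with
  | zero => simp
  | tmul a b => simp only [TensorProduct.map_tmul, W.Sinv_S]
  | add x y hx hy => simp only [map_add, ← hx, ← hy]

lemma WeakHopfAlgebra.swSinvId_eq_swIdS_Sinv (x : A) :
    W.swSinvId x = W.swIdS (W.Sinv x) := by
  rw [WeakHopfAlgebra.swIdS, W.delta_Sinv, WeakHopfAlgebra.swSinvId]
  generalize (TensorProduct.comm ℂ A A) (W.Δ x) = u
  induction u using TensorProduct.induction_on with
  | zero => simp
  | tmul a b => simp [W.S_Sinv]
  | add x y hx hy => simp [map_add, hx, hy]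

private lemma S_mul_aux (u : A ⊗[ℂ] A) :
    W.S ((mul' ℂ A) ((map W.Sinv LinearMap.id) u))
      = (mul' ℂ A) ((map W.S LinearMap.id) ((TensorProduct.comm ℂ A A) u)) := by
  induction u using TensorProduct.induction_on with
  | zero => simp
  | tmul a b =>
      simp only [TensorProduct.map_tmul, LinearMap.mul'_apply, LinearMap.id_coe, id_eq,
        TensorProduct.comm_tmul, W.S_antimul, W.S_Sinv]
  | add x y hx hy => simp only [map_add, hx, hy]

lemma WeakHopfAlgebra.S_swSinvId (x : A) : W.S (W.swSinvId x) = W.swSId x := by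
  rw [WeakHopfAlgebra.swSinvId, WeakHopfAlgebra.swSId, S_mul_aux, commAA]

lemma WeakHopfAlgebra.swSinvId_eq_Sinv_swSId (x : A) :
    W.swSinvId x = W.Sinv (W.swSId x) := by
  rw [← W.S_swSinvId x, W.Sinv_S]

lemma WeakHopfAlgebra.swSId_mem_AR (x : A) : W.swSId x ∈ W.AR :=
  ⟨W.ε ∘ₗ LinearMap.mulLeft ℂ x, W.swSId_eq x⟩

lemma WeakHopfAlgebra.swSinvId_mem_AL (x : A) : W.swSinvId x ∈ W.AL :=
  ⟨W.ε ∘ₗ LinearMap.mulRight ℂ (W.Sinv x), by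
    rw [W.swSinvId_eq_swIdS_Sinv, W.swIdS_eq]⟩

lemma WeakHopfAlgebra.swSId_one : W.swSId 1 = 1 := by
  rw [W.swSId_eq, LinearMap.mulLeft_one, LinearMap.comp_id]
  exact W.counit_right 1

end AuxLemmas

section RepLemmas

open TensorProduct LinearMap

variable {A : Type} [Ring A] [Algebra ℂ A] [StarRing A] [StarModule ℂ A]
variable (W : WeakHopfAlgebra A)

lemma WeakHopfAlgebra.swSId_rep (x : A) (T : Finset (A × A))
    (hT : W.Δ 1 = ∑ p ∈ T, p.1 ⊗ₜ[ℂ] p.2) :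
    W.swSId x = ∑ p ∈ T, W.ε (x * p.2) • p.1 := by
  rw [W.swSId_eq, hT, map_sum, map_sum]
  refine Finset.sum_congr rfl fun p _ => ?_
  simp [TensorProduct.map_tmul, TensorProduct.rid_tmul]

lemma WeakHopfAlgebra.swSId_sum {ι : Type} (x : A) (s : Finset ι) (f g : ι → A)
    (hx : W.Δ x = ∑ i ∈ s, f i ⊗ₜ[ℂ] g i) :
    W.swSId x = ∑ i ∈ s, W.S (f i) * g i := by
  unfold WeakHopfAlgebra.swSId
  rw [hx, map_sum, map_sum]
  refine Finset.sum_congr rfl fun i _ => ?_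
  simp [TensorProduct.map_tmul, LinearMap.mul'_apply]

lemma WeakHopfAlgebra.eps_swSId_mul (x z : A) : W.ε (W.swSId x * z) = W.ε (x * z) := by
  obtain ⟨T, hT⟩ := TensorProduct.exists_finset (W.Δ 1)
  have h := W.counit_weak' x 1 z
  rw [mul_one, hT, map_sum, map_sum] at h
  simp only [TensorProduct.map_tmul, TensorProduct.lid_tmul, LinearMap.comp_apply,
    LinearMap.mulLeft_apply, LinearMap.mulRight_apply, smul_eq_mul] at h
  rw [W.swSId_rep x T hT, Finset.sum_mul, map_sum, h]
  refine Finset.sum_congr rfl fun p _ => ?_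
  rw [smul_mul_assoc, map_smul, smul_eq_mul, mul_comm]

lemma WeakHopfAlgebra.swSId_mul_left (x y : A) :
    W.swSId (W.swSId x * y) = W.swSId (x * y) := by
  obtain ⟨T, hT⟩ := TensorProduct.exists_finset (W.Δ 1)
  rw [W.swSId_rep _ T hT, W.swSId_rep (x * y) T hT]
  refine Finset.sum_congr rfl fun p _ => ?_
  rw [mul_assoc, W.eps_swSId_mul, ← mul_assoc]

set_option synthInstance.maxHeartbeats 400000 in
lemma WeakHopfAlgebra.delta_one_left (T : Finset (A × A))
    (hT : W.Δ 1 = ∑ p ∈ T, p.1 ⊗ₜ[ℂ] p.2) :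
    (TensorProduct.map W.Δ (LinearMap.id : A →ₗ[ℂ] A)) (W.Δ 1)
      = ∑ p ∈ T, ∑ q ∈ T, (p.1 ⊗ₜ[ℂ] (p.2 * q.1)) ⊗ₜ[ℂ] q.2 := by
  rw [← W.unit_weak, hT, TensorProduct.sum_tmul, TensorProduct.tmul_sum, map_sum,
    Finset.sum_mul_sum]
  refine Finset.sum_congr rfl fun p _ => Finset.sum_congr rfl fun q _ => ?_
  rw [TensorProduct.assoc_symm_tmul, Algebra.TensorProduct.tmul_mul_tmul,
    Algebra.TensorProduct.tmul_mul_tmul, mul_one, one_mul]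

set_option synthInstance.maxHeartbeats 400000 in
lemma WeakHopfAlgebra.delta_one_right (T : Finset (A × A))
    (hT : W.Δ 1 = ∑ p ∈ T, p.1 ⊗ₜ[ℂ] p.2) :
    (TensorProduct.map (LinearMap.id : A →ₗ[ℂ] A) W.Δ) (W.Δ 1)
      = ∑ q ∈ T, ∑ p ∈ T, p.1 ⊗ₜ[ℂ] ((q.1 * p.2) ⊗ₜ[ℂ] q.2) := by
  rw [← W.coassoc 1, ← W.unit_weak', hT, TensorProduct.sum_tmul, TensorProduct.tmul_sum,
    map_sum, Finset.sum_mul_sum, map_sum]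
  refine Finset.sum_congr rfl fun q _ => ?_
  rw [map_sum]
  refine Finset.sum_congr rfl fun p _ => ?_
  rw [TensorProduct.assoc_symm_tmul, Algebra.TensorProduct.tmul_mul_tmul,
    Algebra.TensorProduct.tmul_mul_tmul, mul_one, one_mul, TensorProduct.assoc_tmul]

lemma WeakHopfAlgebra.delta_AR {a : A} (ha : a ∈ W.AR) (T : Finset (A × A))
    (hT : W.Δ 1 = ∑ p ∈ T, p.1 ⊗ₜ[ℂ] p.2) :
    W.Δ a = ∑ p ∈ T, p.1 ⊗ₜ[ℂ] (p.2 * a) := by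
  obtain ⟨φ, hφ⟩ := ha
  have ha' : a = ∑ q ∈ T, φ q.2 • q.1 := by
    rw [hφ, hT, map_sum, map_sum]
    exact Finset.sum_congr rfl fun p _ => by
      simp [TensorProduct.map_tmul, TensorProduct.rid_tmul]
  set L : (A ⊗[ℂ] A) ⊗[ℂ] A →ₗ[ℂ] A ⊗[ℂ] A :=
    (TensorProduct.rid ℂ (A ⊗[ℂ] A)).toLinearMap ∘ₗ
      (TensorProduct.map LinearMap.id φ) with hL
  have k1 : L ((TensorProduct.map W.Δ (LinearMap.id : A →ₗ[ℂ] A)) (W.Δ 1)) = W.Δ a := by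
    conv_lhs => rw [hT]
    rw [map_sum, map_sum]
    conv_rhs => rw [ha', map_sum]
    refine Finset.sum_congr rfl fun p _ => ?_
    simp [hL, TensorProduct.map_tmul, TensorProduct.rid_tmul, map_smul]
  have k2 : L (∑ p ∈ T, ∑ q ∈ T, (p.1 ⊗ₜ[ℂ] (p.2 * q.1)) ⊗ₜ[ℂ] q.2)
      = ∑ p ∈ T, p.1 ⊗ₜ[ℂ] (p.2 * a) := by
    rw [map_sum]
    refine Finset.sum_congr rfl fun p _ => ?_
    rw [map_sum]
    conv_rhs => rw [ha', Finset.mul_sum, TensorProduct.tmul_sum]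
    refine Finset.sum_congr rfl fun q _ => ?_
    simp [hL, TensorProduct.map_tmul, TensorProduct.rid_tmul, mul_smul_comm]
  rw [← k1, W.delta_one_left T hT, k2]

lemma WeakHopfAlgebra.delta_AL {a : A} (ha : a ∈ W.AL) (T : Finset (A × A))
    (hT : W.Δ 1 = ∑ p ∈ T, p.1 ⊗ₜ[ℂ] p.2) :
    W.Δ a = ∑ q ∈ T, (q.1 * a) ⊗ₜ[ℂ] q.2 := by
  obtain ⟨φ, hφ⟩ := ha
  have ha' : a = ∑ p ∈ T, φ p.1 • p.2 := by
    rw [hφ, hT, map_sum, map_sum]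
    exact Finset.sum_congr rfl fun p _ => by
      simp [TensorProduct.map_tmul, TensorProduct.lid_tmul]
  set L : A ⊗[ℂ] (A ⊗[ℂ] A) →ₗ[ℂ] A ⊗[ℂ] A :=
    (TensorProduct.lid ℂ (A ⊗[ℂ] A)).toLinearMap ∘ₗ
      (TensorProduct.map φ LinearMap.id) with hL
  have k1 : L ((TensorProduct.map (LinearMap.id : A →ₗ[ℂ] A) W.Δ) (W.Δ 1)) = W.Δ a := by
    conv_lhs => rw [hT]
    rw [map_sum, map_sum]
    conv_rhs => rw [ha', map_sum]
    refine Finset.sum_congr rfl fun p _ => ?_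
    simp [hL, TensorProduct.map_tmul, TensorProduct.lid_tmul, map_smul]
  have k2 : L (∑ q ∈ T, ∑ p ∈ T, p.1 ⊗ₜ[ℂ] ((q.1 * p.2) ⊗ₜ[ℂ] q.2))
      = ∑ q ∈ T, (q.1 * a) ⊗ₜ[ℂ] q.2 := by
    rw [map_sum]
    refine Finset.sum_congr rfl fun q _ => ?_
    rw [map_sum]
    conv_rhs => rw [ha', Finset.mul_sum, TensorProduct.sum_tmul]
    refine Finset.sum_congr rfl fun p _ => ?_
    simp [hL, TensorProduct.map_tmul, TensorProduct.lid_tmul, mul_smul_comm,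
      TensorProduct.smul_tmul']
  rw [← k1, W.delta_one_right T hT, k2]

lemma WeakHopfAlgebra.swSId_AR {a : A} (ha : a ∈ W.AR) : W.swSId a = a := by
  obtain ⟨T, hT⟩ := TensorProduct.exists_finset (W.Δ 1)
  have h1 : W.swSId 1 = ∑ p ∈ T, W.S p.1 * p.2 :=
    W.swSId_sum 1 T (fun p => p.1) (fun p => p.2) hT
  rw [W.swSId_sum a T (fun p => p.1) (fun p => p.2 * a) (W.delta_AR ha T hT)]
  calc ∑ p ∈ T, W.S p.1 * (p.2 * a) = (∑ p ∈ T, W.S p.1 * p.2) * a := by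
        rw [Finset.sum_mul]
        exact Finset.sum_congr rfl fun p _ => (mul_assoc _ _ _).symm
    _ = a := by rw [← h1, W.swSId_one, one_mul]

lemma WeakHopfAlgebra.swSId_AL {a : A} (ha : a ∈ W.AL) : W.swSId a = W.S a := by
  obtain ⟨T, hT⟩ := TensorProduct.exists_finset (W.Δ 1)
  have h1 : W.swSId 1 = ∑ p ∈ T, W.S p.1 * p.2 :=
    W.swSId_sum 1 T (fun p => p.1) (fun p => p.2) hT
  rw [W.swSId_sum a T (fun q => q.1 * a) (fun q => q.2) (W.delta_AL ha T hT)]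
  calc ∑ q ∈ T, W.S (q.1 * a) * q.2 = W.S a * ∑ p ∈ T, W.S p.1 * p.2 := by
        rw [Finset.mul_sum]
        refine Finset.sum_congr rfl fun q _ => ?_
        rw [W.S_antimul, mul_assoc]
    _ = W.S a := by rw [← h1, W.swSId_one, mul_one]

end RepLemmas
/-- Lemma 2.22 of [NSW] ("Radon–Nikodym derivatives" for left integrals):
with `d_R(l) = Σ S(l₍₁₎)·l₍₂₎` and `d_L(l) = Σ S⁻¹(l₍₂₎)·l₍₁₎`:
(i) `h·a` is a left integral for every `a`;
(ii) every left integral `l` satisfies `d_R(l) ∈ A_R`, `d_L(l) ∈ A_L` and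
`l = h·d_R(l) = h·d_L(l)`;
(iii) `d_R(h·a) = a` for `a ∈ A_R` and `d_L(h·a) = a` for `a ∈ A_L`, so that
right multiplication on `h` is a bijection from `A_R` (resp. `A_L`) onto the
space of left integrals. -/
theorem left_integrals_structure
    {A : Type} [Ring A] [Algebra ℂ A] [StarRing A] [StarModule ℂ A]
    (W : WeakHopfAlgebra A) (h : A) (hh : W.IsHaar h) :
    (∀ a : A, W.IsLeftIntegral (h * a))
    ∧ (∀ l : A, W.IsLeftIntegral l →
        W.swSId l ∈ W.AR ∧ W.swSinvId l ∈ W.AL ∧ l = h * W.swSId l ∧ l = h * W.swSinvId l)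
    ∧ (∀ a ∈ W.AR, W.swSId (h * a) = a)
    ∧ (∀ a ∈ W.AL, W.swSinvId (h * a) = a)
    ∧ Set.BijOn (fun a : A => h * a) W.AR {l | W.IsLeftIntegral l}
    ∧ Set.BijOn (fun a : A => h * a) W.AL {l | W.IsLeftIntegral l}    := by
  obtain ⟨hL, hR, hs1, ht1, hS⟩ := hh
  have part1 : ∀ a : A, W.IsLeftIntegral (h * a) := by
    intro a b
    rw [← mul_assoc, ← mul_assoc, hL b]
  have key1 : ∀ l : A, W.IsLeftIntegral l → l = h * W.swSId l := by
    intro l hl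
    have e1 : h * l = l := by rw [hl h, ht1, one_mul]
    rw [← hR l]
    exact e1.symm
  have keyG : ∀ x ∈ W.AR, h * x = h * W.Sinv x := by
    intro x hx
    have h1 : W.Sinv x = W.swSinvId x := by
      rw [W.swSinvId_eq_Sinv_swSId, W.swSId_AR hx]
    have h2 : W.Sinv x ∈ W.AL := by rw [h1]; exact W.swSinvId_mem_AL x
    rw [hR (W.Sinv x), W.swSId_AL h2, W.S_Sinv]
  have key2 : ∀ l : A, W.IsLeftIntegral l → l = h * W.swSinvId l := by
    intro l hl
    rw [W.swSinvId_eq_Sinv_swSId, ← keyG _ (W.swSId_mem_AR l)]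
    exact key1 l hl
  have part3a : ∀ a ∈ W.AR, W.swSId (h * a) = a := by
    intro a ha
    have e := W.swSId_mul_left h a
    rw [hs1, one_mul] at e
    rw [← e, W.swSId_AR ha]
  have part3b : ∀ a ∈ W.AL, W.swSinvId (h * a) = a := by
    intro a ha
    have e := W.swSId_mul_left h a
    rw [hs1, one_mul] at e
    rw [W.swSinvId_eq_Sinv_swSId, ← e, W.swSId_AL ha, W.Sinv_S]
  refine ⟨part1, fun l hl => ⟨W.swSId_mem_AR l, W.swSinvId_mem_AL l, key1 l hl, key2 l hl⟩,
    part3a, part3b,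
    ⟨fun a _ => part1 a, fun a ha b hb hab => ?_,
      fun l hl => ⟨W.swSId l, W.swSId_mem_AR l, (key1 l hl).symm⟩⟩,
    ⟨fun a _ => part1 a, fun a ha b hb hab => ?_,
      fun l hl => ⟨W.swSinvId l, W.swSinvId_mem_AL l, (key2 l hl).symm⟩⟩⟩
  · have e : h * a = h * b := hab
    rw [← part3a a ha, ← part3a b hb, e]
  · have e : h * a = h * b := hab
    rw [← part3b a ha, ← part3b b hb, e]
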